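/- Let φ be a representation of W_E, χ a character of W_E of depth zero, and define θ(φ) = (φ ⊗ χ') ⊕ χ where χ' is also a depth-zero character. If depth(φ) > 0 then depth(θ(φ)) = depth(φ); if depth(φ) = 0 then depth(θ(φ)) = 0. -/
import Mathlib


/-- The depth of a (linear) action of `G` with respect to a decreasing filtration
`Gp : ℝ → Subgroup G` (where `Gp r` models the ramification subgroup `G^{r+}`):
the infimum of the `r ≥ 0` such that the action is trivial on `G^{r+}`. -/
noncomputable def depthOf {G V : Type*} [Group G] [AddCommGroup V] [Module ℂ V]
    (Gp : ℝ → Subgroup G) (ρ : G → Module.End ℂ V) : ℝ :=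
  sInf {r : ℝ | 0 ≤ r ∧ ∀ g ∈ Gp r, ρ g = 1}

/-- Let `φ` be a representation of `W_E` (of finite depth), `χ, χ'`
depth-zero characters (trivial on `G^{0+}`), and `θ(φ) = (φ ⊗ χ') ⊕ χ`.  If
`depth φ > 0` then `depth θ(φ) = depth φ`; if `depth φ = 0` then `depth θ(φ) = 0`. -/
theorem stmt_17 {G V : Type*} [Group G] [AddCommGroup V] [Module ℂ V]
    (Gp : ℝ → Subgroup G) (hmono : ∀ {r s : ℝ}, r ≤ s → Gp s ≤ Gp r)
    (φ : G →* Module.End ℂ V) (χ χ' : G →* ℂˣ)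
    (hχ : ∀ g ∈ Gp 0, χ g = 1) (hχ' : ∀ g ∈ Gp 0, χ' g = 1)
    (hfin : ∃ r : ℝ, 0 ≤ r ∧ ∀ g ∈ Gp r, φ g = 1) :
    (0 < depthOf Gp (fun g => φ g) →
      depthOf Gp
          (fun g => LinearMap.prodMap ((χ' g : ℂ) • φ g) ((χ g : ℂ) • (1 : Module.End ℂ ℂ)))
        = depthOf Gp (fun g => φ g)) ∧
    (depthOf Gp (fun g => φ g) = 0 →
      depthOf Gp
          (fun g => LinearMap.prodMap ((χ' g : ℂ) • φ g) ((χ g : ℂ) • (1 : Module.End ℂ ℂ)))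
        = 0) := by
  have key :
      {r : ℝ | 0 ≤ r ∧ ∀ g ∈ Gp r,
          LinearMap.prodMap ((χ' g : ℂ) • φ g) ((χ g : ℂ) • (1 : Module.End ℂ ℂ)) = 1}
        = {r : ℝ | 0 ≤ r ∧ ∀ g ∈ Gp r, φ g = 1} := by
    ext r
    simp only [Set.mem_setOf_eq]
    constructor
    · rintro ⟨hr, h⟩
      refine ⟨hr, fun g hg => ?_⟩
      have hg0 : g ∈ Gp 0 := hmono hr hg
      have h1 : (χ' g : ℂ) = 1 := by rw [hχ' g hg0]; rfl
      have h2 := h g hg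
      rw [h1, one_smul] at h2
      ext v
      have := congrArg (fun f => f (v, (0 : ℂ))) h2
      simpa using congrArg Prod.fst this
    · rintro ⟨hr, h⟩
      refine ⟨hr, fun g hg => ?_⟩
      have hg0 : g ∈ Gp 0 := hmono hr hg
      have h1 : (χ' g : ℂ) = 1 := by rw [hχ' g hg0]; rfl
      have h2 : (χ g : ℂ) = 1 := by rw [hχ g hg0]; rfl
      rw [h1, h2, one_smul, one_smul, h g hg]
      refine LinearMap.ext fun x => ?_
      simp [LinearMap.prodMap_apply]
  have heq :
      depthOf Gp
          (fun g => LinearMap.prodMap ((χ' g : ℂ) • φ g) ((χ g : ℂ) • (1 : Module.End ℂ ℂ)))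
        = depthOf Gp (fun g => φ g) := by
    unfold depthOf
    rw [key]
  exact ⟨fun _ => heq, fun h => heq.trans h⟩
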